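/- If a finite group G is homogeneous of rank n, then G is isomorphic to its homogeneous cover H(n,G). -/
import Mathlib


/-- `(x₁,…,xₙ)` is a generating sequence of `G`: the entries generate `G`. -/
def IsGenSeq {G : Type*} [Group G] {n : ℕ} (x : Fin n → G) : Prop :=
  Subgroup.closure (Set.range x) = ⊤

/-- `r(G)`: the least `n` such that `G` has a generating sequence of length `n`. -/
noncomputable def grank (G : Type*) [Group G] : ℕ :=
  sInf {n : ℕ | ∃ x : Fin n → G, IsGenSeq x}

/-- `G` is homogeneous of rank `n`: `Γ_n(G)` is nonempty and `Aut(G)` acts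
transitively on it. -/
def IsHomogeneous (G : Type*) [Group G] (n : ℕ) : Prop :=
  (∃ x : Fin n → G, IsGenSeq x) ∧
    ∀ x y : Fin n → G, IsGenSeq x → IsGenSeq y → ∃ f : G ≃* G, ∀ i, f (x i) = y i

/-- The intersection of the kernels of all surjective homomorphisms `F_n → G`. -/
def coverKer (n : ℕ) (G : Type*) [Group G] : Subgroup (FreeGroup (Fin n)) :=
  ⨅ f ∈ {f : FreeGroup (Fin n) →* G | Function.Surjective f}, MonoidHom.ker f

instance coverKer_normal (n : ℕ) (G : Type*) [Group G] : (coverKer n G).Normal := by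
  constructor
  intro x hx g
  simp only [coverKer, Subgroup.mem_iInf] at hx ⊢
  intro f hf
  exact (MonoidHom.normal_ker f).conj_mem x (hx f hf) g

/-- The homogeneous cover `H(n,G) = F_n / K`, where `K` is the intersection of the
kernels of all surjective homomorphisms `F_n → G`. -/
abbrev HomogeneousCover (n : ℕ) (G : Type*) [Group G] :=
  FreeGroup (Fin n) ⧸ coverKer n G

/-- If `G` is homogeneous of rank `n`, then `G ≅ H(n,G)`. -/
theorem iso_cover_of_isHomogeneous (G : Type*) [Group G] [Finite G] (n : ℕ)
    (h : IsHomogeneous G n) : Nonempty (G ≃* HomogeneousCover n G) := by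
  obtain ⟨⟨x, hx⟩, htrans⟩ := h
  set π : FreeGroup (Fin n) →* G := FreeGroup.lift x with hπ
  have hπsurj : Function.Surjective π := by
    rw [← MonoidHom.range_eq_top, FreeGroup.range_lift_eq_closure, hx]
  have hker : coverKer n G = MonoidHom.ker π := by
    apply le_antisymm
    · exact biInf_le _ hπsurj
    · intro w hw
      simp only [coverKer, Subgroup.mem_iInf]
      intro f hf
      have hgen : IsGenSeq (fun i => f (FreeGroup.of i)) := by
        unfold IsGenSeq
        have : f = FreeGroup.lift (fun i => f (FreeGroup.of i)) := by
          ext i; simp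
        rw [← FreeGroup.range_lift_eq_closure, ← this, MonoidHom.range_eq_top]
        exact hf
      obtain ⟨φ, hφ⟩ := htrans x (fun i => f (FreeGroup.of i)) hx hgen
      have hcomp : (φ.toMonoidHom.comp π) = f := by
        ext i
        simp [hπ, hφ]
      have : f w = φ (π w) := by rw [← hcomp]; rfl
      rw [MonoidHom.mem_ker, this, show π w = 1 from hw, map_one]
  exact ⟨((QuotientGroup.quotientKerEquivOfSurjective π hπsurj).symm.trans
    (QuotientGroup.quotientMulEquivOfEq hker.symm))⟩
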